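/- Let K ⊆ E be a field extension of finite degree s, let m be a positive integer, and let ι : M_m(E) → M_{ms}(K) be a unitary embedding of K-algebras. Then the centralizer of the image ι(M_m(E)) in the matrix algebra M_{ms}(K) equals ι(E·I_m), the image under ι of the set of scalar matrices {z·I_m : z ∈ E}; and conversely, the centralizer of ι(E·I_m) in M_{ms}(K) equals ι(M_m(E)). In other words, ι(E·I_m) and ι(M_m(E)) are mutual centralizers in M_{ms}(K). -/

import Mathlib

open Module

theorem aux_centralizer (K E : Type) [Field K] [Field E] [Algebra K E] [FiniteDimensional K E]
    (s : ℕ) (hs : Module.finrank K E = s) (m : ℕ) (hm : 0 < m)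
    (ι : Matrix (Fin m) (Fin m) E →ₐ[K] Matrix (Fin (m * s)) (Fin (m * s)) K)
    (hι : Function.Injective ⇑ι) :
    Set.centralizer (Set.range fun z : E => ι (z • (1 : Matrix (Fin m) (Fin m) E)))
      = Set.range ⇑ι := by
  classical
  let V := Fin (m * s) → K
  let f : E →ₐ[K] Matrix (Fin (m * s)) (Fin (m * s)) K :=
    ι.comp ((Algebra.ofId E (Matrix (Fin m) (Fin m) E)).restrictScalars K)
  have hf : ∀ z : E, f z = ι (z • (1 : Matrix (Fin m) (Fin m) E)) := fun z => by
    simp [f, Algebra.ofId_apply, Algebra.algebraMap_eq_smul_one]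
  have hrange : (Set.range fun z : E => ι (z • (1 : Matrix (Fin m) (Fin m) E)))
      = Set.range ⇑f := by
    have h : (fun z : E => ι (z • (1 : Matrix (Fin m) (Fin m) E))) = ⇑f :=
      funext fun z => (hf z).symm
    rw [h]
  let T : Matrix (Fin (m * s)) (Fin (m * s)) K ≃ₐ[K] Module.End K V :=
    Matrix.toLinAlgEquiv'
  let g : E →ₐ[K] Module.End K V := (T : _ →ₐ[K] _).comp f
  letI : Module E V := Module.compHom V g.toRingHom
  have hsmul : ∀ (z : E) (v : V), z • v = g z v := fun _ _ => rfl
  haveI : SMulCommClass E K V :=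
    ⟨fun z c v => ((g z).map_smul c v)⟩
  haveI : IsScalarTower K E V :=
    ⟨fun c z v => by
      show g (c • z) v = c • g z v
      rw [map_smul]
      rfl⟩
  haveI : Module.Finite E V := Module.Finite.of_restrictScalars_finite K E V
  have hs0 : 0 < s := hs ▸ finrank_pos
  have hdV : finrank E V = m := by
    have h1 : finrank K E * finrank E V = finrank K V := finrank_mul_finrank K E V
    have h2 : finrank K V = m * s := Module.finrank_fin_fun K
    rw [hs, h2] at h1
    have : s * finrank E V = s * m := by rw [h1, Nat.mul_comm]
    exact Nat.eq_of_mul_eq_mul_left hs0 this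
  -- the centralizer of range f as a submodule
  let C : Subalgebra K (Matrix (Fin (m * s)) (Fin (m * s)) K) :=
    Subalgebra.centralizer K (Set.range ⇑f)
  -- linear map from C to E-linear endomorphisms
  have hcomm : ∀ x ∈ Set.centralizer (Set.range ⇑f), ∀ z : E,
      T x ∘ₗ (g z : V →ₗ[K] V) = (g z : V →ₗ[K] V) ∘ₗ T x := by
    intro x hx z
    have h1 : f z * x = x * f z := hx (f z) ⟨z, rfl⟩
    have h2 := congrArg T h1
    rw [map_mul, map_mul] at h2
    exact (LinearMap.ext fun v => DFunLike.congr_fun h2.symm v)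
  let toE : ∀ x : Matrix (Fin (m * s)) (Fin (m * s)) K,
      x ∈ Set.centralizer (Set.range ⇑f) → (V →ₗ[E] V) := fun x hx =>
    { toFun := T x
      map_add' := (T x).map_add
      map_smul' := fun z v => DFunLike.congr_fun (hcomm x hx z) v }
  let Φ : Subalgebra.toSubmodule C →ₗ[K] (V →ₗ[E] V) :=
    { toFun := fun x => toE x.1 x.2
      map_add' := fun x y => LinearMap.ext fun v => by
        show T (x.1 + y.1) v = T x.1 v + T y.1 v
        rw [map_add]; rfl
      map_smul' := fun c x => LinearMap.ext fun v => by
        show T (c • x.1) v = c • T x.1 v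
        rw [map_smul]; rfl }
  have hΦinj : Function.Injective Φ := by
    intro x y h
    have h2 : T (x : Matrix (Fin (m*s)) (Fin (m*s)) K) = T (y : Matrix (Fin (m*s)) (Fin (m*s)) K) :=
      LinearMap.ext fun v => DFunLike.congr_fun h v
    have : T x.1 = T y.1 := h2
    exact Subtype.ext (T.injective this)
  have hΦsurj : Function.Surjective Φ := by
    intro ψ
    have hxmem : T.symm (ψ.restrictScalars K) ∈ Set.centralizer (Set.range ⇑f) := by
      rintro _ ⟨z, rfl⟩
      apply T.injective
      rw [map_mul, map_mul, T.apply_symm_apply]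
      refine LinearMap.ext fun v => ?_
      show T (f z) (ψ v) = ψ (T (f z) v)
      exact (ψ.map_smul z v).symm
    refine ⟨⟨T.symm (ψ.restrictScalars K), hxmem⟩, ?_⟩
    exact LinearMap.ext fun v => by
      show T (T.symm (ψ.restrictScalars K)) v = ψ v
      rw [T.apply_symm_apply]; rfl
  haveI : SMulCommClass E E V := ⟨fun a b v => by rw [smul_smul, smul_smul, mul_comm a b]⟩
  haveI : IsScalarTower K E (V →ₗ[E] V) :=
    ⟨fun c z ψ => LinearMap.ext fun v => smul_assoc c z (ψ v)⟩
  have hfinC : finrank K (Subalgebra.toSubmodule C) = s * (m * m) := by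
    have e : Subalgebra.toSubmodule C ≃ₗ[K] (V →ₗ[E] V) :=
      LinearEquiv.ofBijective Φ ⟨hΦinj, hΦsurj⟩
    have h1 : finrank K (Subalgebra.toSubmodule C) = finrank K (V →ₗ[E] V) := e.finrank_eq
    rw [h1]
    have h2 : finrank K E * finrank E (V →ₗ[E] V) = finrank K (V →ₗ[E] V) :=
      finrank_mul_finrank K E _
    rw [← h2, hs, Module.finrank_linearMap, hdV]
  -- the range of ι as a submodule
  have hle : LinearMap.range ι.toLinearMap ≤ Subalgebra.toSubmodule C := by
    rintro _ ⟨w, rfl⟩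
    rintro _ ⟨z, rfl⟩
    show f z * ι w = ι w * f z
    rw [hf, ← map_mul, ← map_mul]
    congr 1
    rw [← Algebra.algebraMap_eq_smul_one]
    exact Algebra.commutes z w
  have hfinR : finrank K (LinearMap.range ι.toLinearMap) = m * (m * s) := by
    have e := (LinearEquiv.ofInjective ι.toLinearMap hι).symm
    rw [e.finrank_eq, Module.finrank_matrix, Fintype.card_fin, hs]
    ring
  have heq : LinearMap.range ι.toLinearMap = Subalgebra.toSubmodule C := by
    apply Submodule.eq_of_le_of_finrank_le hle
    rw [hfinC, hfinR]
    exact Nat.le_of_eq (by ring)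
  rw [hrange]
  have : (Set.centralizer (Set.range ⇑f)) = (Subalgebra.toSubmodule C : Set _) := rfl
  rw [this, ← heq]
  rfl

/-- Let `K ⊆ E` be a field extension of finite degree `s`, `m` a positive
integer, and `ι : M_m(E) → M_{ms}(K)` a unitary embedding of `K`-algebras. Then the centralizer
of the image `ι(M_m(E))` in `M_{ms}(K)` equals `ι(E·I_m)` (the image of the scalar matrices),
and the centralizer of `ι(E·I_m)` equals `ι(M_m(E))`: they are mutual centralizers. -/
theorem stmt_2 (K E : Type) [Field K] [Field E] [Algebra K E] [FiniteDimensional K E]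
    (s : ℕ) (hs : Module.finrank K E = s) (m : ℕ) (hm : 0 < m)
    (ι : Matrix (Fin m) (Fin m) E →ₐ[K] Matrix (Fin (m * s)) (Fin (m * s)) K)
    (hι : Function.Injective ⇑ι) :
    Set.centralizer (Set.range ⇑ι)
        = ⇑ι '' {x : Matrix (Fin m) (Fin m) E | ∃ z : E, x = z • (1 : Matrix (Fin m) (Fin m) E)} ∧
    Set.centralizer
        (⇑ι '' {x : Matrix (Fin m) (Fin m) E | ∃ z : E, x = z • (1 : Matrix (Fin m) (Fin m) E)})
        = Set.range ⇑ι := by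
  classical
  have hset : ⇑ι '' {x : Matrix (Fin m) (Fin m) E | ∃ z : E, x = z • (1 : Matrix (Fin m) (Fin m) E)}
      = Set.range fun z : E => ι (z • (1 : Matrix (Fin m) (Fin m) E)) := by
    ext y
    constructor
    · rintro ⟨x, ⟨z, rfl⟩, rfl⟩
      exact ⟨z, rfl⟩
    · rintro ⟨z, rfl⟩
      exact ⟨z • 1, ⟨z, rfl⟩, rfl⟩
  have haux := aux_centralizer K E s hs m hm ι hι
  constructor
  · rw [hset]
    apply Set.Subset.antisymm
    · intro y hy
      have hsub : (Set.range fun z : E => ι (z • (1 : Matrix (Fin m) (Fin m) E)))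
          ⊆ Set.range ⇑ι := by
        rintro _ ⟨z, rfl⟩
        exact ⟨z • 1, rfl⟩
      have hy' : y ∈ Set.centralizer
          (Set.range fun z : E => ι (z • (1 : Matrix (Fin m) (Fin m) E))) :=
        Set.centralizer_subset hsub hy
      rw [haux] at hy'
      obtain ⟨x, rfl⟩ := hy'
      have hxcomm : ∀ w : Matrix (Fin m) (Fin m) E, w * x = x * w := by
        intro w
        apply hι
        rw [map_mul, map_mul]
        exact hy (ι w) ⟨w, rfl⟩
      have hxscalar : x ∈ Set.range (Matrix.scalar (Fin m)) := by
        apply Matrix.mem_range_scalar_of_commute_single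
        intro i j _
        exact (hxcomm _)
      obtain ⟨z, hz⟩ := hxscalar
      refine ⟨z, ?_⟩
      show ι (z • 1) = ι x
      rw [← hz, Matrix.scalar_apply, Matrix.smul_one_eq_diagonal]
    · rintro _ ⟨z, rfl⟩
      rintro _ ⟨w, rfl⟩
      rw [← map_mul, ← map_mul]
      congr 1
      rw [← Algebra.algebraMap_eq_smul_one]
      exact (Algebra.commutes z w).symm
  · rw [hset]
    exact haux
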